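/- Let Ỹ and Λ be finite-dimensional real inner product spaces, B : Ỹ → Λ a continuous linear map, C ⊆ Ỹ a nonempty closed convex set, and H : Ỹ → ℝ a convex continuous function. Let τ, σ > 0 satisfy τ σ ‖B‖² < 1. Define L(p, λ) = H(p) + ⟨B p, λ⟩ for p ∈ C, λ ∈ Λ, and generate sequences by p₋₁ = p₀ ∈ C, λ₀ ∈ Λ, λ_{n+1} = λ_n + σ B(2 p_n − p_{n−1}), and p_{n+1} the minimizer over C of q ↦ H(q) + (1/(2τ)) ‖q − (p_n − τ B^* λ_{n+1})‖². Assume there exists a saddle point (p̂, λ̂) ∈ C × Λ, i.e., L(p̂, λ) ≤ L(p̂, λ̂) ≤ L(p, λ̂) for all p ∈ C and λ ∈ Λ. Then the sequence (p_n, λ_n) converges to some saddle point (p*, λ*) of L. -/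

import Mathlib

open Filter Topology
set_option maxHeartbeats 2000000

theorem aux_amgm (r s X E M : ℝ) (hr : 0 < r) (hs : 0 < s) (hM : 0 ≤ M) (hX : 0 ≤ X) (hE : 0 ≤ E) :
    M * X * E ≤ (Real.sqrt (r*s) * M) * (X^2/(2*r) + E^2/(2*s)) := by
  have h1 : Real.sqrt (r*s) = Real.sqrt r * Real.sqrt s := Real.sqrt_mul hr.le s
  have h2 : Real.sqrt r ^ 2 = r := Real.sq_sqrt hr.le
  have h3 : Real.sqrt s ^ 2 = s := Real.sq_sqrt hs.le
  have hr' : 0 < Real.sqrt r := Real.sqrt_pos.2 hr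
  have hs' : 0 < Real.sqrt s := Real.sqrt_pos.2 hs
  have key : X * E ≤ Real.sqrt (r*s) * (X^2/(2*r) + E^2/(2*s)) := by
    rw [h1, ← h2, ← h3]
    set u := Real.sqrt r with hu
    set v := Real.sqrt s with hv
    field_simp
    rw [Real.sqrt_sq hr'.le, Real.sqrt_sq hs'.le]
    nlinarith [mul_le_mul_of_nonneg_left (two_mul_le_add_sq (v*X) (u*E)) (by positivity : (0:ℝ) ≤ 2*u*v)]
  calc M * X * E = M * (X * E) := by ring
    _ ≤ M * (Real.sqrt (r*s) * (X^2/(2*r) + E^2/(2*s))) := mul_le_mul_of_nonneg_left key hM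
    _ = (Real.sqrt (r*s) * M) * (X^2/(2*r) + E^2/(2*s)) := by ring

theorem aux_inner_id {Y : Type*} [NormedAddCommGroup Y] [InnerProductSpace ℝ Y] (a b c : Y) :
    (inner ℝ (a - b) (c - b) : ℝ) = (‖a - b‖^2 + ‖c - b‖^2 - ‖a - c‖^2)/2 := by
  have h : a - c = (a - b) - (c - b) := by abel
  have := @norm_sub_sq_real Y _ _ (a - b) (c - b)
  rw [h]; linarith

theorem aux_vi {Y : Type*} [NormedAddCommGroup Y] [InnerProductSpace ℝ Y]
    (C : Set Y) (hCconvex : Convex ℝ C)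
    (H : Y → ℝ) (hHconvex : ConvexOn ℝ Set.univ H)
    (τ : ℝ) (hτ : 0 < τ) (c x : Y) (hx : x ∈ C)
    (hmin : ∀ q ∈ C, H x + (1/(2*τ)) * ‖x - c‖^2 ≤ H q + (1/(2*τ)) * ‖q - c‖^2)
    (q : Y) (hq : q ∈ C) :
    (1/τ) * (inner ℝ (c - x) (q - x) : ℝ) ≤ H q - H x := by
  set c₀ : ℝ := H q - H x + (1/τ) * (inner ℝ (x - c) (q - x) : ℝ) with hc₀
  set c₁ : ℝ := ‖q - x‖^2 / (2*τ) with hc₁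
  have hstep : ∀ t : ℝ, 0 < t → t ≤ 1 → 0 ≤ c₀ + t * c₁ := by
    intro t ht ht1
    have hqt : x + t • (q - x) ∈ C := by
      have := hCconvex hx hq (by linarith : (0:ℝ) ≤ 1 - t) ht.le (by ring)
      convert this using 1
      module
    have hH : H (x + t • (q - x)) ≤ (1-t) * H x + t * H q := by
      have := hHconvex.2 (Set.mem_univ x) (Set.mem_univ q) (by linarith : (0:ℝ) ≤ 1 - t) ht.le (by ring)
      have e : x + t • (q - x) = (1-t) • x + t • q := by module
      rw [e]; simpa [smul_eq_mul] using this
    have hmin' := hmin _ hqt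
    have hexp : ‖x + t • (q - x) - c‖^2
        = ‖x - c‖^2 + 2 * t * (inner ℝ (x - c) (q - x) : ℝ) + t^2 * ‖q - x‖^2 := by
      have h1 : x + t • (q - x) - c = (x - c) + t • (q - x) := by abel
      rw [h1, @norm_add_sq_real, real_inner_smul_right, norm_smul]
      simp [abs_of_pos ht, mul_pow]
      ring
    rw [hexp] at hmin'
    have key : 0 ≤ t * (c₀ + t * c₁) := by
      have e1 : (1/(2*τ)) * (‖x - c‖^2 + 2 * t * (inner ℝ (x - c) (q - x) : ℝ) + t^2 * ‖q - x‖^2)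
          = (1/(2*τ)) * ‖x - c‖^2 + t * ((1/τ) * (inner ℝ (x - c) (q - x) : ℝ)) + t * (t * c₁) := by
        rw [hc₁]; field_simp
      rw [hc₀]
      nlinarith [hmin', hH]
    by_contra hneg
    push_neg at hneg
    have : t * (c₀ + t * c₁) < 0 := mul_neg_of_pos_of_neg ht hneg
    linarith
  have hc₀nonneg : 0 ≤ c₀ := by
    have htend : Tendsto (fun k : ℕ => c₀ + (1/(k+1:ℝ)) * c₁) atTop (𝓝 (c₀ + 0 * c₁)) := by
      exact (tendsto_const_nhds.add (tendsto_one_div_add_atTop_nhds_zero_nat.mul tendsto_const_nhds))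
    have : (0:ℝ) ≤ c₀ + 0 * c₁ := by
      refine ge_of_tendsto htend (Eventually.of_forall fun k => ?_)
      exact hstep _ (by positivity) (by
        rw [div_le_one (by positivity)]; linarith [Nat.cast_nonneg (α := ℝ) k])
    linarith
  have hflip : (inner ℝ (x - c) (q - x) : ℝ) = - (inner ℝ (c - x) (q - x) : ℝ) := by
    rw [← inner_neg_left]; congr 1; abel
  rw [hc₀, hflip] at hc₀nonneg
  linarith

theorem aux_key {Y Λ : Type*} [NormedAddCommGroup Y] [InnerProductSpace ℝ Y] [FiniteDimensional ℝ Y]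
    [NormedAddCommGroup Λ] [InnerProductSpace ℝ Λ] [FiniteDimensional ℝ Λ]
    (B : Y →L[ℝ] Λ) (C : Set Y) (hCconvex : Convex ℝ C)
    (H : Y → ℝ) (hHconvex : ConvexOn ℝ Set.univ H)
    (τ σ : ℝ) (hτ : 0 < τ) (hσ : 0 < σ)
    (p : ℕ → Y) (lam : ℕ → Λ)
    (hlam : ∀ n : ℕ, lam (n + 1) = lam n + σ • B ((2 : ℝ) • p n - p (n - 1)))
    (hpmem : ∀ n : ℕ, p (n + 1) ∈ C)
    (hpmin : ∀ n : ℕ, ∀ q ∈ C,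
      H (p (n + 1)) + (1 / (2 * τ)) *
          ‖p (n + 1) - (p n - τ • (ContinuousLinearMap.adjoint B) (lam (n + 1)))‖ ^ 2 ≤
        H q + (1 / (2 * τ)) *
          ‖q - (p n - τ • (ContinuousLinearMap.adjoint B) (lam (n + 1)))‖ ^ 2)
    (ph : Y) (lh : Λ) (hph : ph ∈ C) (hBph : B ph = 0)
    (hsad2 : ∀ q ∈ C, H ph ≤ H q + (inner ℝ (B q) lh : ℝ)) (n : ℕ) :
    (1/(2*τ)) * (‖ph - p (n+1)‖^2 + ‖p (n+1) - p n‖^2 - ‖ph - p n‖^2)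
      + (1/(2*σ)) * (‖lh - lam (n+1)‖^2 + ‖lam (n+1) - lam n‖^2 - ‖lh - lam n‖^2)
    ≤ (inner ℝ (B ((p (n+1) - p n) - (p n - p (n-1)))) (lh - lam (n+1)) : ℝ) := by
  set A := ContinuousLinearMap.adjoint B with hA
  -- primal variational inequality at q = ph
  have hvi := aux_vi C hCconvex H hHconvex τ hτ (p n - τ • A (lam (n+1))) (p (n+1))
    (hpmem n) (fun q hq => by simpa using hpmin n q hq) ph hph
  -- rewrite inner product
  have hsplit : (inner ℝ ((p n - τ • A (lam (n+1))) - p (n+1)) (ph - p (n+1)) : ℝ)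
      = (inner ℝ (p n - p (n+1)) (ph - p (n+1)) : ℝ)
        + τ * (inner ℝ (B (p (n+1))) (lam (n+1)) : ℝ) := by
    have h1 : (p n - τ • A (lam (n+1))) - p (n+1) = (p n - p (n+1)) - τ • A (lam (n+1)) := by abel
    rw [h1, inner_sub_left, real_inner_smul_left]
    have h2 : (inner ℝ (A (lam (n+1))) (ph - p (n+1)) : ℝ)
        = (inner ℝ (lam (n+1)) (B (ph - p (n+1))) : ℝ) := ContinuousLinearMap.adjoint_inner_left B _ _
    rw [h2, map_sub, hBph, zero_sub, inner_neg_right,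
      real_inner_comm (lam (n+1)) (B (p (n+1)))]
    ring
  rw [hsplit] at hvi
  have hvi2 : (1/τ) * (inner ℝ (p n - p (n+1)) (ph - p (n+1)) : ℝ)
      + (inner ℝ (B (p (n+1))) (lam (n+1)) : ℝ) ≤ H ph - H (p (n+1)) := by
    have hτ' : τ ≠ 0 := ne_of_gt hτ
    have : (1/τ) * ((inner ℝ (p n - p (n+1)) (ph - p (n+1)) : ℝ)
        + τ * (inner ℝ (B (p (n+1))) (lam (n+1)) : ℝ))
        = (1/τ) * (inner ℝ (p n - p (n+1)) (ph - p (n+1)) : ℝ)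
          + (inner ℝ (B (p (n+1))) (lam (n+1)) : ℝ) := by field_simp
    rw [this] at hvi
    exact hvi
  have hsad := hsad2 (p (n+1)) (hpmem n)
  -- primal estimate
  have hprim : (1/τ) * (inner ℝ (p n - p (n+1)) (ph - p (n+1)) : ℝ)
      ≤ (inner ℝ (B (p (n+1))) (lh - lam (n+1)) : ℝ) := by
    have hs : (inner ℝ (B (p (n+1))) (lh - lam (n+1)) : ℝ)
        = (inner ℝ (B (p (n+1))) lh : ℝ) - (inner ℝ (B (p (n+1))) (lam (n+1)) : ℝ) :=
      inner_sub_right _ _ _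
    rw [hs]
    linarith
  -- dual identity
  have hdual : (1/σ) * (inner ℝ (lam n - lam (n+1)) (lh - lam (n+1)) : ℝ)
      = - (inner ℝ (B ((2:ℝ) • p n - p (n-1))) (lh - lam (n+1)) : ℝ) := by
    have h1 : lam n - lam (n+1) = -(σ • B ((2:ℝ) • p n - p (n-1))) := by
      rw [hlam n]; abel
    rw [h1, inner_neg_left, real_inner_smul_left]
    field_simp
  -- sum
  have hsum : (1/τ) * (inner ℝ (p n - p (n+1)) (ph - p (n+1)) : ℝ)
      + (1/σ) * (inner ℝ (lam n - lam (n+1)) (lh - lam (n+1)) : ℝ)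
      ≤ (inner ℝ (B ((p (n+1) - p n) - (p n - p (n-1)))) (lh - lam (n+1)) : ℝ) := by
    have hB : B ((p (n+1) - p n) - (p n - p (n-1))) = B (p (n+1)) - B ((2:ℝ) • p n - p (n-1)) := by
      rw [← map_sub]; congr 1; module
    have hgoal : (inner ℝ (B ((p (n+1) - p n) - (p n - p (n-1)))) (lh - lam (n+1)) : ℝ)
        = (inner ℝ (B (p (n+1))) (lh - lam (n+1)) : ℝ)
          + - (inner ℝ (B ((2:ℝ) • p n - p (n-1))) (lh - lam (n+1)) : ℝ) := by
      rw [hB, inner_sub_left]; ring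
    rw [hgoal]
    exact add_le_add hprim (le_of_eq hdual)
  -- inner identities
  have e1 : (inner ℝ (p n - p (n+1)) (ph - p (n+1)) : ℝ)
      = (‖p n - p (n+1)‖^2 + ‖ph - p (n+1)‖^2 - ‖p n - ph‖^2)/2 := aux_inner_id _ _ _
  have e2 : (inner ℝ (lam n - lam (n+1)) (lh - lam (n+1)) : ℝ)
      = (‖lam n - lam (n+1)‖^2 + ‖lh - lam (n+1)‖^2 - ‖lam n - lh‖^2)/2 := aux_inner_id _ _ _
  rw [e1, e2] at hsum
  have n1 : ‖p n - p (n+1)‖ = ‖p (n+1) - p n‖ := norm_sub_rev _ _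
  have n2 : ‖p n - ph‖ = ‖ph - p n‖ := norm_sub_rev _ _
  have n3 : ‖lam n - lam (n+1)‖ = ‖lam (n+1) - lam n‖ := norm_sub_rev _ _
  have n4 : ‖lam n - lh‖ = ‖lh - lam n‖ := norm_sub_rev _ _
  rw [n1, n2, n3, n4] at hsum
  have hτ' : (0:ℝ) < 2*τ := by linarith
  have hσ' : (0:ℝ) < 2*σ := by linarith
  calc (1/(2*τ)) * (‖ph - p (n+1)‖^2 + ‖p (n+1) - p n‖^2 - ‖ph - p n‖^2)
      + (1/(2*σ)) * (‖lh - lam (n+1)‖^2 + ‖lam (n+1) - lam n‖^2 - ‖lh - lam n‖^2)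
      = (1/τ) * ((‖p (n+1) - p n‖^2 + ‖ph - p (n+1)‖^2 - ‖ph - p n‖^2)/2)
        + (1/σ) * ((‖lam (n+1) - lam n‖^2 + ‖lh - lam (n+1)‖^2 - ‖lh - lam n‖^2)/2) := by
        field_simp; ring
    _ ≤ _ := hsum

theorem aux_fejer {Y Λ : Type*} [NormedAddCommGroup Y] [InnerProductSpace ℝ Y] [FiniteDimensional ℝ Y]
    [NormedAddCommGroup Λ] [InnerProductSpace ℝ Λ] [FiniteDimensional ℝ Λ]
    (B : Y →L[ℝ] Λ) (C : Set Y) (hCconvex : Convex ℝ C)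
    (H : Y → ℝ) (hHconvex : ConvexOn ℝ Set.univ H)
    (τ σ : ℝ) (hτ : 0 < τ) (hσ : 0 < σ)
    (p : ℕ → Y) (lam : ℕ → Λ)
    (hlam : ∀ n : ℕ, lam (n + 1) = lam n + σ • B ((2 : ℝ) • p n - p (n - 1)))
    (hpmem : ∀ n : ℕ, p (n + 1) ∈ C)
    (hpmin : ∀ n : ℕ, ∀ q ∈ C,
      H (p (n + 1)) + (1 / (2 * τ)) *
          ‖p (n + 1) - (p n - τ • (ContinuousLinearMap.adjoint B) (lam (n + 1)))‖ ^ 2 ≤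
        H q + (1 / (2 * τ)) *
          ‖q - (p n - τ • (ContinuousLinearMap.adjoint B) (lam (n + 1)))‖ ^ 2)
    (ph : Y) (lh : Λ) (hph : ph ∈ C) (hBph : B ph = 0)
    (hsad2 : ∀ q ∈ C, H ph ≤ H q + (inner ℝ (B q) lh : ℝ)) (n : ℕ) :
    (1 - Real.sqrt (τ*σ) * ‖B‖) * (‖ph - p n‖^2/(2*τ) + ‖lh - lam n‖^2/(2*σ))
      ≤ (‖ph - p n‖^2/(2*τ) + ‖lh - lam n‖^2/(2*σ))
          - (inner ℝ (B (p n - p (n-1))) (lh - lam n) : ℝ)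
          + (Real.sqrt (τ*σ) * ‖B‖) * (‖p n - p (n-1)‖^2/(2*τ))
    ∧ ((‖ph - p (n+1)‖^2/(2*τ) + ‖lh - lam (n+1)‖^2/(2*σ))
          - (inner ℝ (B (p (n+1) - p n)) (lh - lam (n+1)) : ℝ)
          + (Real.sqrt (τ*σ) * ‖B‖) * (‖p (n+1) - p n‖^2/(2*τ)))
        + (1 - Real.sqrt (τ*σ) * ‖B‖)
            * (‖p (n+1) - p n‖^2/(2*τ) + ‖lam (n+1) - lam n‖^2/(2*σ))
      ≤ (‖ph - p n‖^2/(2*τ) + ‖lh - lam n‖^2/(2*σ))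
          - (inner ℝ (B (p n - p (n-1))) (lh - lam n) : ℝ)
          + (Real.sqrt (τ*σ) * ‖B‖) * (‖p n - p (n-1)‖^2/(2*τ)) := by
  set κ : ℝ := Real.sqrt (τ*σ) * ‖B‖ with hκ
  have hκ0 : 0 ≤ κ := by positivity
  -- bound on inner products via Cauchy-Schwarz + AM-GM
  have hbound : ∀ (y : Y) (w : Λ), (inner ℝ (B y) w : ℝ) ≤ κ * (‖y‖^2/(2*τ) + ‖w‖^2/(2*σ)) := by
    intro y w
    calc (inner ℝ (B y) w : ℝ) ≤ ‖B y‖ * ‖w‖ := real_inner_le_norm _ _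
      _ ≤ ‖B‖ * ‖y‖ * ‖w‖ := mul_le_mul_of_nonneg_right (B.le_opNorm y) (norm_nonneg w)
      _ ≤ (Real.sqrt (τ*σ) * ‖B‖) * (‖y‖^2/(2*τ) + ‖w‖^2/(2*σ)) :=
          aux_amgm τ σ _ _ _ hτ hσ (norm_nonneg B) (norm_nonneg y) (norm_nonneg w)
  constructor
  · have b2 := hbound (p n - p (n-1)) (lh - lam n)
    have hP : 0 ≤ κ * (‖ph - p n‖^2/(2*τ)) := by positivity
    nlinarith [b2, hP]
  · have key := aux_key B C hCconvex H hHconvex τ σ hτ hσ p lam hlam hpmem hpmin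
      ph lh hph hBph hsad2 n
    -- expand the cross term
    have hcross : (inner ℝ (B ((p (n+1) - p n) - (p n - p (n-1)))) (lh - lam (n+1)) : ℝ)
        = (inner ℝ (B (p (n+1) - p n)) (lh - lam (n+1)) : ℝ)
          - (inner ℝ (B (p n - p (n-1))) (lh - lam n) : ℝ)
          + (inner ℝ (B (p n - p (n-1))) (lam (n+1) - lam n) : ℝ) := by
      rw [map_sub, inner_sub_left]
      have h1 : lh - lam (n+1) = (lh - lam n) - (lam (n+1) - lam n) := by abel
      have h2 : (inner ℝ (B (p n - p (n-1))) (lh - lam (n+1)) : ℝ)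
          = (inner ℝ (B (p n - p (n-1))) (lh - lam n) : ℝ)
            - (inner ℝ (B (p n - p (n-1))) (lam (n+1) - lam n) : ℝ) := by
        rw [h1, inner_sub_right]
      rw [h2]; ring
    rw [hcross] at key
    have b1 := hbound (p n - p (n-1)) (lam (n+1) - lam n)
    -- linear arithmetic
    have hτ2 : (0:ℝ) < 2*τ := by linarith
    have hσ2 : (0:ℝ) < 2*σ := by linarith
    have e1 : (1/(2*τ)) * (‖ph - p (n+1)‖^2 + ‖p (n+1) - p n‖^2 - ‖ph - p n‖^2)
        = ‖ph - p (n+1)‖^2/(2*τ) + ‖p (n+1) - p n‖^2/(2*τ) - ‖ph - p n‖^2/(2*τ) := by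
      field_simp
    have e2 : (1/(2*σ)) * (‖lh - lam (n+1)‖^2 + ‖lam (n+1) - lam n‖^2 - ‖lh - lam n‖^2)
        = ‖lh - lam (n+1)‖^2/(2*σ) + ‖lam (n+1) - lam n‖^2/(2*σ) - ‖lh - lam n‖^2/(2*σ) := by
      field_simp
    rw [e1, e2] at key
    nlinarith [key, b1]

theorem aux_norm_sq_tendsto {E : Type*} [NormedAddCommGroup E] (x : ℕ → E)
    (h : Filter.Tendsto (fun n => ‖x n‖^2) atTop (𝓝 0)) :
    Filter.Tendsto x atTop (𝓝 0) := by
  rw [tendsto_zero_iff_norm_tendsto_zero]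
  have h2 := (Real.continuous_sqrt.tendsto 0).comp h
  simpa [Function.comp_def, Real.sqrt_sq_eq_abs] using h2

/-- convergence of the iterates of the first-order primal-dual
(Chambolle–Pock) algorithm applied to `min_{p ∈ C} max_λ { H(p) + ⟨B p, λ⟩ }`,
assuming a saddle point exists. The sequence is indexed so that `p 0 = p₀` also
plays the role of `p₋₁` (note `0 - 1 = 0` in `ℕ`, encoding `p₋₁ = p₀`). -/
theorem chambolle_pock_iterates_converge
    {Y Λ : Type*} [NormedAddCommGroup Y] [InnerProductSpace ℝ Y] [FiniteDimensional ℝ Y]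
    [NormedAddCommGroup Λ] [InnerProductSpace ℝ Λ] [FiniteDimensional ℝ Λ]
    (B : Y →L[ℝ] Λ) (C : Set Y) (hCne : C.Nonempty) (hCclosed : IsClosed C)
    (hCconvex : Convex ℝ C)
    (H : Y → ℝ) (hHconvex : ConvexOn ℝ Set.univ H) (hHcont : Continuous H)
    (τ σ : ℝ) (hτ : 0 < τ) (hσ : 0 < σ) (hτσ : τ * σ * ‖B‖ ^ 2 < 1)
    (p : ℕ → Y) (lam : ℕ → Λ) (hp0 : p 0 ∈ C)
    (hlam : ∀ n : ℕ, lam (n + 1) = lam n + σ • B ((2 : ℝ) • p n - p (n - 1)))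
    (hpmem : ∀ n : ℕ, p (n + 1) ∈ C)
    (hpmin : ∀ n : ℕ, ∀ q ∈ C,
      H (p (n + 1)) + (1 / (2 * τ)) *
          ‖p (n + 1) - (p n - τ • (ContinuousLinearMap.adjoint B) (lam (n + 1)))‖ ^ 2 ≤
        H q + (1 / (2 * τ)) *
          ‖q - (p n - τ • (ContinuousLinearMap.adjoint B) (lam (n + 1)))‖ ^ 2)
    (phat : Y) (lamhat : Λ) (hphat : phat ∈ C)
    (hsaddle : ∀ q ∈ C, ∀ mu : Λ,
      H phat + (inner ℝ (B phat) mu : ℝ) ≤ H phat + (inner ℝ (B phat) lamhat : ℝ) ∧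
      H phat + (inner ℝ (B phat) lamhat : ℝ) ≤ H q + (inner ℝ (B q) lamhat : ℝ)) :
    ∃ (pstar : Y) (lamstar : Λ), pstar ∈ C ∧
      (∀ q ∈ C, ∀ mu : Λ,
        H pstar + (inner ℝ (B pstar) mu : ℝ) ≤ H pstar + (inner ℝ (B pstar) lamstar : ℝ) ∧
        H pstar + (inner ℝ (B pstar) lamstar : ℝ) ≤ H q + (inner ℝ (B q) lamstar : ℝ)) ∧
      Filter.Tendsto (fun n => (p n, lam n)) Filter.atTop (nhds (pstar, lamstar)) := by
  -- κ facts
  obtain ⟨κ, hκdef⟩ : ∃ κ : ℝ, κ = Real.sqrt (τ*σ) * ‖B‖ := ⟨_, rfl⟩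
  have hκ0 : 0 ≤ κ := by rw [hκdef]; positivity
  have hκsq : κ^2 = τ * σ * ‖B‖^2 := by
    rw [hκdef, mul_pow, Real.sq_sqrt (by positivity : (0:ℝ) ≤ τ*σ)]
  have hκ1 : κ < 1 := by nlinarith
  -- saddle point structure
  have hBphat : B phat = 0 := by
    have h := (hsaddle phat hphat (lamhat + B phat)).1
    rw [inner_add_right] at h
    have h2 : (inner ℝ (B phat) (B phat) : ℝ) ≤ 0 := by linarith
    exact real_inner_self_nonpos.1 h2
  have hsad2 : ∀ q ∈ C, H phat ≤ H q + (inner ℝ (B q) lamhat : ℝ) := by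
    intro q hq
    have h := (hsaddle q hq lamhat).2
    rw [hBphat] at h
    simpa using h
  have allC : ∀ n, p n ∈ C := fun n => Nat.rec hp0 (fun m _ => hpmem m) n
  -- Fejér estimates for (phat, lamhat)
  obtain ⟨bb, hbb⟩ : ∃ bb : ℕ → ℝ, bb = fun n =>
    (‖phat - p n‖^2/(2*τ) + ‖lamhat - lam n‖^2/(2*σ))
      - (inner ℝ (B (p n - p (n-1))) (lamhat - lam n) : ℝ)
      + κ * (‖p n - p (n-1)‖^2/(2*τ)) := ⟨_, rfl⟩
  obtain ⟨g, hg⟩ : ∃ g : ℕ → ℝ, g = fun n =>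
    ‖p (n+1) - p n‖^2/(2*τ) + ‖lam (n+1) - lam n‖^2/(2*σ) := ⟨_, rfl⟩
  have F := aux_fejer B C hCconvex H hHconvex τ σ hτ hσ p lam hlam hpmem hpmin
    phat lamhat hphat hBphat hsad2
  have hbbsucc : ∀ n, bb (n+1) + (1-κ) * g n ≤ bb n := by
    intro n
    have := (F n).2
    simp only [hbb, hg, Nat.add_sub_cancel]
    convert this using 3 <;> rw [hκdef]
  have hbblow : ∀ n, (1-κ) * (‖phat - p n‖^2/(2*τ) + ‖lamhat - lam n‖^2/(2*σ)) ≤ bb n := by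
    intro n
    have := (F n).1
    simp only [hbb]
    convert this using 2 <;> rw [hκdef]
  have hgnonneg : ∀ n, 0 ≤ g n := by intro n; simp only [hg]; positivity
  have hbbnonneg : ∀ n, 0 ≤ bb n := fun n =>
    le_trans (mul_nonneg (by linarith) (by positivity)) (hbblow n)
  have hbbanti : ∀ n m, n ≤ m → bb m ≤ bb n := by
    have : ∀ n, bb (n+1) ≤ bb n := fun n => by
      have h1 := hbbsucc n
      have h2 : 0 ≤ (1-κ) * g n := mul_nonneg (by linarith) (hgnonneg n)
      linarith
    exact fun n m h => antitone_nat_of_succ_le this h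
  -- summability of g
  have hgsum : Summable g := by
    apply summable_of_sum_range_le hgnonneg (c := bb 0 / (1-κ))
    intro n
    have htel : ∑ i ∈ Finset.range n, (bb i - bb (i+1)) = bb 0 - bb n :=
      Finset.sum_range_sub' bb n
    have hterm : ∀ i ∈ Finset.range n, (1-κ) * g i ≤ bb i - bb (i+1) := by
      intro i _; linarith [hbbsucc i]
    have hsum1 : ∑ i ∈ Finset.range n, (1-κ) * g i ≤ bb 0 - bb n := by
      rw [← htel]; exact Finset.sum_le_sum hterm
    rw [← Finset.mul_sum] at hsum1
    rw [le_div_iff₀ (by linarith : (0:ℝ) < 1-κ)]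
    have := hbbnonneg n
    linarith [hsum1]
  have hg0 : Tendsto g atTop (𝓝 0) := hgsum.tendsto_atTop_zero
  -- difference sequences tend to zero
  have hd0 : Tendsto (fun n => p (n+1) - p n) atTop (𝓝 0) := by
    apply aux_norm_sq_tendsto
    have hsq : Tendsto (fun n => ‖p (n+1) - p n‖^2/(2*τ)) atTop (𝓝 0) := by
      apply squeeze_zero (fun n => by positivity) (fun n => ?_) hg0
      simp only [hg]
      have : (0:ℝ) ≤ ‖lam (n+1) - lam n‖^2/(2*σ) := by positivity
      linarith
    have := hsq.const_mul (2*τ)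
    simp only [mul_zero] at this
    convert this using 2 with n
    field_simp
  have he0 : Tendsto (fun n => lam (n+1) - lam n) atTop (𝓝 0) := by
    apply aux_norm_sq_tendsto
    have hsq : Tendsto (fun n => ‖lam (n+1) - lam n‖^2/(2*σ)) atTop (𝓝 0) := by
      apply squeeze_zero (fun n => by positivity) (fun n => ?_) hg0
      simp only [hg]
      have : (0:ℝ) ≤ ‖p (n+1) - p n‖^2/(2*τ) := by positivity
      linarith
    have := hsq.const_mul (2*σ)
    simp only [mul_zero] at this
    convert this using 2 with n
    field_simp
  have hd0' : Tendsto (fun n => p n - p (n-1)) atTop (𝓝 0) := by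
    rw [← Filter.tendsto_add_atTop_iff_nat 1]
    simpa using hd0
  -- boundedness
  have hbb0 : ∀ n, bb n ≤ bb 0 := fun n => hbbanti 0 n (Nat.zero_le n)
  obtain ⟨M, hM⟩ : ∃ M : ℝ, M = bb 0 / (1-κ) := ⟨_, rfl⟩
  have hMnonneg : 0 ≤ M := by
    rw [hM]; exact div_nonneg (hbbnonneg 0) (by linarith)
  have haaM : ∀ n, ‖phat - p n‖^2/(2*τ) + ‖lamhat - lam n‖^2/(2*σ) ≤ M := by
    intro n
    rw [hM, le_div_iff₀ (by linarith : (0:ℝ) < 1-κ)]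
    calc (‖phat - p n‖^2/(2*τ) + ‖lamhat - lam n‖^2/(2*σ)) * (1-κ)
        = (1-κ) * (‖phat - p n‖^2/(2*τ) + ‖lamhat - lam n‖^2/(2*σ)) := by ring
      _ ≤ bb n := hbblow n
      _ ≤ bb 0 := hbb0 n
  have hpbound : ∀ n, ‖p n‖ ≤ ‖phat‖ + Real.sqrt (2*τ*M) := by
    intro n
    have h1 : ‖phat - p n‖^2 ≤ 2*τ*M := by
      have := haaM n
      have h2 : (0:ℝ) ≤ ‖lamhat - lam n‖^2/(2*σ) := by positivity
      have h3 : ‖phat - p n‖^2/(2*τ) ≤ M := by linarith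
      rw [div_le_iff₀ (by linarith : (0:ℝ) < 2*τ)] at h3
      linarith [h3]
    have h4 : ‖phat - p n‖ ≤ Real.sqrt (2*τ*M) := by
      rw [← Real.sqrt_sq (norm_nonneg (phat - p n))]
      exact Real.sqrt_le_sqrt h1
    calc ‖p n‖ = ‖phat - (phat - p n)‖ := by congr 1; abel
      _ ≤ ‖phat‖ + ‖phat - p n‖ := norm_sub_le _ _
      _ ≤ ‖phat‖ + Real.sqrt (2*τ*M) := by linarith
  have hlbound : ∀ n, ‖lam n‖ ≤ ‖lamhat‖ + Real.sqrt (2*σ*M) := by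
    intro n
    have h1 : ‖lamhat - lam n‖^2 ≤ 2*σ*M := by
      have := haaM n
      have h2 : (0:ℝ) ≤ ‖phat - p n‖^2/(2*τ) := by positivity
      have h3 : ‖lamhat - lam n‖^2/(2*σ) ≤ M := by linarith
      rw [div_le_iff₀ (by linarith : (0:ℝ) < 2*σ)] at h3
      linarith [h3]
    have h4 : ‖lamhat - lam n‖ ≤ Real.sqrt (2*σ*M) := by
      rw [← Real.sqrt_sq (norm_nonneg (lamhat - lam n))]
      exact Real.sqrt_le_sqrt h1
    calc ‖lam n‖ = ‖lamhat - (lamhat - lam n)‖ := by congr 1; abel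
      _ ≤ ‖lamhat‖ + ‖lamhat - lam n‖ := norm_sub_le _ _
      _ ≤ ‖lamhat‖ + Real.sqrt (2*σ*M) := by linarith
  -- compactness: extract convergent subsequence
  obtain ⟨R, hR⟩ : ∃ R : ℝ, R = (‖phat‖ + Real.sqrt (2*τ*M)) + (‖lamhat‖ + Real.sqrt (2*σ*M)) := ⟨_, rfl⟩
  have hzmem : ∀ n, (p n, lam n) ∈ Metric.closedBall (0 : Y × Λ) R := by
    intro n
    rw [Metric.mem_closedBall, dist_zero_right]
    have : ‖((p n, lam n) : Y × Λ)‖ = max ‖p n‖ ‖lam n‖ := rfl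
    rw [this]
    apply max_le
    · have := hpbound n
      have h2 : (0:ℝ) ≤ ‖lamhat‖ + Real.sqrt (2*σ*M) := by positivity
      linarith
    · have := hlbound n
      have h2 : (0:ℝ) ≤ ‖phat‖ + Real.sqrt (2*τ*M) := by positivity
      linarith
  obtain ⟨z0, _, φ, hφmono, hφtend⟩ :=
    (isCompact_closedBall (0 : Y × Λ) R).tendsto_subseq hzmem
  obtain ⟨pstar, hps⟩ : ∃ x : Y, x = z0.1 := ⟨_, rfl⟩
  obtain ⟨lamstar, hls⟩ : ∃ x : Λ, x = z0.2 := ⟨_, rfl⟩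
  have hφatop : Tendsto φ atTop atTop := hφmono.tendsto_atTop
  have hptend : Tendsto (fun j => p (φ j)) atTop (𝓝 pstar) := by
    rw [hps]
    exact ((continuous_fst.tendsto z0).comp hφtend)
  have hltend : Tendsto (fun j => lam (φ j)) atTop (𝓝 lamstar) := by
    rw [hls]
    exact ((continuous_snd.tendsto z0).comp hφtend)
  have hp1tend : Tendsto (fun j => p (φ j + 1)) atTop (𝓝 pstar) := by
    have := hptend.add (hd0.comp hφatop)
    simpa using this
  have hl1tend : Tendsto (fun j => lam (φ j + 1)) atTop (𝓝 lamstar) := by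
    have := hltend.add (he0.comp hφatop)
    simpa using this
  have hdφ : Tendsto (fun j => p (φ j) - p (φ j - 1)) atTop (𝓝 0) := hd0'.comp hφatop
  -- pstar ∈ C
  have hpstarC : pstar ∈ C := hCclosed.mem_of_tendsto hptend
    (Eventually.of_forall fun j => allC _)
  -- B pstar = 0
  have hBpstar : B pstar = 0 := by
    have hseq : ∀ j, lam (φ j + 1) - lam (φ j) = σ • B (p (φ j) + (p (φ j) - p (φ j - 1))) := by
      intro j
      rw [hlam (φ j)]
      have : (2:ℝ) • p (φ j) - p (φ j - 1) = p (φ j) + (p (φ j) - p (φ j - 1)) := by module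
      rw [this]; abel
    have h1 : Tendsto (fun j => lam (φ j + 1) - lam (φ j)) atTop (𝓝 0) := by
      have := hl1tend.sub hltend
      simpa using this
    have h2 : Tendsto (fun j => σ • B (p (φ j) + (p (φ j) - p (φ j - 1)))) atTop
        (𝓝 (σ • B pstar)) := by
      have harg : Tendsto (fun j => p (φ j) + (p (φ j) - p (φ j - 1))) atTop (𝓝 pstar) := by
        have := hptend.add hdφ
        simpa using this
      exact ((B.continuous.tendsto pstar).comp harg).const_smul σ
    have heq : (fun j => lam (φ j + 1) - lam (φ j))
        = fun j => σ • B (p (φ j) + (p (φ j) - p (φ j - 1))) := funext hseq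
    rw [heq] at h1
    have := tendsto_nhds_unique h1 h2
    have hσB : σ • B pstar = 0 := this.symm
    rcases smul_eq_zero.1 hσB with h | h
    · exact absurd h (ne_of_gt hσ)
    · exact h
  -- second saddle inequality for (pstar, lamstar)
  have hsadstar : ∀ q ∈ C, H pstar ≤ H q + (inner ℝ (B q) lamstar : ℝ) := by
    intro q hq
    have hVI : ∀ n, (1/τ) * (inner ℝ (p n - p (n+1)) (q - p (n+1)) : ℝ)
        - (inner ℝ (B q - B (p (n+1))) (lam (n+1)) : ℝ) ≤ H q - H (p (n+1)) := by
      intro n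
      set A := ContinuousLinearMap.adjoint B with hA
      have hvi := aux_vi C hCconvex H hHconvex τ hτ (p n - τ • A (lam (n+1))) (p (n+1))
        (hpmem n) (fun r hr => by simpa using hpmin n r hr) q hq
      have hsplit : (inner ℝ ((p n - τ • A (lam (n+1))) - p (n+1)) (q - p (n+1)) : ℝ)
          = (inner ℝ (p n - p (n+1)) (q - p (n+1)) : ℝ)
            - τ * (inner ℝ (B q - B (p (n+1))) (lam (n+1)) : ℝ) := by
        have h1 : (p n - τ • A (lam (n+1))) - p (n+1) = (p n - p (n+1)) - τ • A (lam (n+1)) := by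
          abel
        rw [h1, inner_sub_left, real_inner_smul_left]
        have h2 : (inner ℝ (A (lam (n+1))) (q - p (n+1)) : ℝ)
            = (inner ℝ (lam (n+1)) (B (q - p (n+1))) : ℝ) :=
          ContinuousLinearMap.adjoint_inner_left B _ _
        rw [h2, map_sub, real_inner_comm (lam (n+1)) (B q - B (p (n+1)))]
      rw [hsplit] at hvi
      have hexp : (1/τ) * ((inner ℝ (p n - p (n+1)) (q - p (n+1)) : ℝ)
          - τ * (inner ℝ (B q - B (p (n+1))) (lam (n+1)) : ℝ))
          = (1/τ) * (inner ℝ (p n - p (n+1)) (q - p (n+1)) : ℝ)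
            - (inner ℝ (B q - B (p (n+1))) (lam (n+1)) : ℝ) := by
        field_simp
      rw [hexp] at hvi
      exact hvi
    have t1 : Tendsto (fun j => p (φ j) - p (φ j + 1)) atTop (𝓝 0) := by
      have := hptend.sub hp1tend; simpa using this
    have t2 : Tendsto (fun j => q - p (φ j + 1)) atTop (𝓝 (q - pstar)) :=
      tendsto_const_nhds.sub hp1tend
    have t3 : Tendsto (fun j => B q - B (p (φ j + 1))) atTop (𝓝 (B q - B pstar)) :=
      tendsto_const_nhds.sub ((B.continuous.tendsto _).comp hp1tend)
    have hL : Tendsto (fun j => (1/τ) * (inner ℝ (p (φ j) - p (φ j + 1)) (q - p (φ j + 1)) : ℝ)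
        - (inner ℝ (B q - B (p (φ j + 1))) (lam (φ j + 1)) : ℝ)) atTop
        (𝓝 ((1/τ) * (inner ℝ (0:Y) (q - pstar) : ℝ) - (inner ℝ (B q - B pstar) lamstar : ℝ))) :=
      ((t1.inner t2).const_mul (1/τ)).sub (t3.inner hl1tend)
    have hRt : Tendsto (fun j => H q - H (p (φ j + 1))) atTop (𝓝 (H q - H pstar)) :=
      tendsto_const_nhds.sub ((hHcont.tendsto _).comp hp1tend)
    have hlim := le_of_tendsto_of_tendsto' hL hRt (fun j => hVI (φ j))
    rw [hBpstar] at hlim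
    simp only [inner_zero_left, mul_zero, sub_zero, zero_sub] at hlim
    linarith
  -- conclusion: apply Fejér to (pstar, lamstar)
  obtain ⟨bs, hbs⟩ : ∃ bs : ℕ → ℝ, bs = fun n =>
    (‖pstar - p n‖^2/(2*τ) + ‖lamstar - lam n‖^2/(2*σ))
      - (inner ℝ (B (p n - p (n-1))) (lamstar - lam n) : ℝ)
      + κ * (‖p n - p (n-1)‖^2/(2*τ)) := ⟨_, rfl⟩
  have F2 := aux_fejer B C hCconvex H hHconvex τ σ hτ hσ p lam hlam hpmem hpmin
    pstar lamstar hpstarC hBpstar hsadstar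
  have hbssucc : ∀ n, bs (n+1) + (1-κ) * g n ≤ bs n := by
    intro n
    have := (F2 n).2
    simp only [hbs, hg, Nat.add_sub_cancel]
    convert this using 3 <;> rw [hκdef]
  have hbslow : ∀ n, (1-κ) * (‖pstar - p n‖^2/(2*τ) + ‖lamstar - lam n‖^2/(2*σ)) ≤ bs n := by
    intro n
    have := (F2 n).1
    simp only [hbs]
    convert this using 2 <;> rw [hκdef]
  have hbsnonneg : ∀ n, 0 ≤ bs n := fun n =>
    le_trans (mul_nonneg (by linarith) (by positivity)) (hbslow n)
  have hbsanti : ∀ n m, n ≤ m → bs m ≤ bs n := by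
    have hstep : ∀ n, bs (n+1) ≤ bs n := fun n => by
      have h1 := hbssucc n
      have h2 : 0 ≤ (1-κ) * g n := mul_nonneg (by linarith) (hgnonneg n)
      linarith
    exact fun n m h => antitone_nat_of_succ_le hstep h
  -- bs along the subsequence tends to 0
  have hbsφ : Tendsto (fun j => bs (φ j)) atTop (𝓝 0) := by
    have c1 : Tendsto (fun j => pstar - p (φ j)) atTop (𝓝 0) := by
      have := (tendsto_const_nhds (x := pstar) (f := atTop)).sub hptend
      simpa using this
    have c2 : Tendsto (fun j => lamstar - lam (φ j)) atTop (𝓝 0) := by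
      have := (tendsto_const_nhds (x := lamstar) (f := atTop)).sub hltend
      simpa using this
    have n1 : Tendsto (fun j => ‖pstar - p (φ j)‖^2/(2*τ)) atTop (𝓝 0) := by
      have := ((c1.norm).pow 2).div_const (2*τ)
      simpa using this
    have n2 : Tendsto (fun j => ‖lamstar - lam (φ j)‖^2/(2*σ)) atTop (𝓝 0) := by
      have := ((c2.norm).pow 2).div_const (2*σ)
      simpa using this
    have n3 : Tendsto (fun j => (inner ℝ (B (p (φ j) - p (φ j - 1))) (lamstar - lam (φ j)) : ℝ))
        atTop (𝓝 0) := by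
      have hB0 : Tendsto (fun j => B (p (φ j) - p (φ j - 1))) atTop (𝓝 0) := by
        have h := (B.continuous.tendsto 0).comp hdφ
        rw [map_zero] at h
        exact h
      have h2 : Tendsto (fun j => (inner ℝ (B (p (φ j) - p (φ j - 1))) (lamstar - lam (φ j)) : ℝ))
          atTop (𝓝 (inner ℝ (0:Λ) (0:Λ) : ℝ)) := hB0.inner c2
      simpa only [inner_zero_left] using h2
    have n4 : Tendsto (fun j => κ * (‖p (φ j) - p (φ j - 1)‖^2/(2*τ))) atTop (𝓝 0) := by
      have := (((hdφ.norm).pow 2).div_const (2*τ)).const_mul κ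
      simpa using this
    have htot := ((n1.add n2).sub n3).add n4
    simp only [add_zero, sub_zero] at htot
    simp only [hbs]
    exact htot
  have hbs0 : Tendsto bs atTop (𝓝 0) := by
    refine tendsto_order.2 ⟨fun a ha => ?_, fun a ha => ?_⟩
    · exact Eventually.of_forall fun n => lt_of_lt_of_le ha (hbsnonneg n)
    · have hev := hbsφ.eventually (gt_mem_nhds ha)
      obtain ⟨j, hj⟩ := hev.exists
      filter_upwards [eventually_ge_atTop (φ j)] with n hn
      exact lt_of_le_of_lt (hbsanti _ _ hn) hj
  have haas0 : Tendsto (fun n => ‖pstar - p n‖^2/(2*τ) + ‖lamstar - lam n‖^2/(2*σ))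
      atTop (𝓝 0) := by
    have hup : Tendsto (fun n => (1/(1-κ)) * bs n) atTop (𝓝 0) := by
      have h := hbs0.const_mul (1/(1-κ))
      rw [mul_zero] at h
      exact h
    refine squeeze_zero (fun n => by positivity) (fun n => ?_) hup
    have h1 := hbslow n
    have h2 : (0:ℝ) ≤ 1/(1-κ) := (one_div_pos.2 (by linarith : (0:ℝ) < 1-κ)).le
    calc ‖pstar - p n‖^2/(2*τ) + ‖lamstar - lam n‖^2/(2*σ)
        = (1/(1-κ)) * ((1-κ) * (‖pstar - p n‖^2/(2*τ) + ‖lamstar - lam n‖^2/(2*σ))) := by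
          rw [one_div, ← mul_assoc, inv_mul_cancel₀ (by linarith : (1:ℝ)-κ ≠ 0), one_mul]
      _ ≤ (1/(1-κ)) * bs n := mul_le_mul_of_nonneg_left h1 h2
  have hpconv : Tendsto p atTop (𝓝 pstar) := by
    have h1 : Tendsto (fun n => ‖pstar - p n‖^2/(2*τ)) atTop (𝓝 0) := by
      refine squeeze_zero (fun n => by positivity) (fun n => ?_) haas0
      have : (0:ℝ) ≤ ‖lamstar - lam n‖^2/(2*σ) := by positivity
      linarith
    have h2 : Tendsto (fun n => pstar - p n) atTop (𝓝 0) := by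
      apply aux_norm_sq_tendsto
      have := h1.const_mul (2*τ)
      simp only [mul_zero] at this
      convert this using 2 with n
      field_simp
    have h3 := (tendsto_const_nhds (x := pstar) (f := atTop)).sub h2
    simpa using h3
  have hlconv : Tendsto lam atTop (𝓝 lamstar) := by
    have h1 : Tendsto (fun n => ‖lamstar - lam n‖^2/(2*σ)) atTop (𝓝 0) := by
      refine squeeze_zero (fun n => by positivity) (fun n => ?_) haas0
      have : (0:ℝ) ≤ ‖pstar - p n‖^2/(2*τ) := by positivity
      linarith
    have h2 : Tendsto (fun n => lamstar - lam n) atTop (𝓝 0) := by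
      apply aux_norm_sq_tendsto
      have := h1.const_mul (2*σ)
      simp only [mul_zero] at this
      convert this using 2 with n
      field_simp
    have h3 := (tendsto_const_nhds (x := lamstar) (f := atTop)).sub h2
    simpa using h3
  refine ⟨pstar, lamstar, hpstarC, fun q hq mu => ⟨?_, ?_⟩, hpconv.prodMk_nhds hlconv⟩
  · rw [hBpstar]
    simp
  · have := hsadstar q hq
    rw [hBpstar]
    simpa using this
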